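/- Let (G, I, O, λ) be a labelled open graph with a Pauli flow (p, ≺), let W ⊆ V be any subset of vertices, and form G′ by adding a fresh vertex x adjacent exactly to the vertices of W, with λ′(x) = Z and λ′ = λ elsewhere. Then G′ = (V ∪ {x}, E ∪ {(x,w) : w ∈ W}, I, O, λ′) has a Pauli flow; in fact, p′ defined by p′(v) = p(v) for v ≠ x and p′(x) = {x}, together with the transitive closure of ≺ ∪ {(x,v) : v ∈ N_{G′}(x)}, is a Pauli flow for G′. -/
import Mathlib


/-- Measurement labels: Pauli measurements and measurement planes. -/
inductive MeasLabel | X | Y | Z | XY | XZ | YZ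
deriving DecidableEq

/-- The odd neighbourhood of a set `S`: vertices with an odd number of neighbours in `S`. -/
def OddNbhd {V : Type*} [Fintype V] (G : SimpleGraph V) (S : Set V) : Set V :=
  {v | Odd ((G.neighborSet v ∩ S).ncard)}

open MeasLabel in
/-- Pauli flow for a labelled open graph `(G, I, O, lam)`. -/
def IsPauliFlow {V : Type*} [Fintype V] (G : SimpleGraph V) (Inp Out : Set V)
    (lam : V → MeasLabel) (p : V → Set V) (ord : V → V → Prop) : Prop :=
  Irreflexive ord ∧ Transitive ord ∧
  (∀ u ∉ Out, p u ⊆ Inpᶜ) ∧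
  -- (1)
  (∀ u ∉ Out, ∀ v ∉ Out, v ∈ p u → v ≠ u → lam v ≠ X → lam v ≠ Y → ord u v) ∧
  -- (2)
  (∀ u ∉ Out, ∀ v ∉ Out, v ∈ OddNbhd G (p u) → v ≠ u → lam v ≠ Y → lam v ≠ Z → ord u v) ∧
  -- (3)
  (∀ u ∉ Out, ∀ v ∉ Out, ¬ ord u v → lam v = Y → (v ∈ p u ↔ v ∈ OddNbhd G (p u))) ∧
  -- (4)
  (∀ u ∉ Out, lam u = XY → u ∉ p u ∧ u ∈ OddNbhd G (p u)) ∧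
  -- (5)
  (∀ u ∉ Out, lam u = XZ → u ∈ p u ∧ u ∈ OddNbhd G (p u)) ∧
  -- (6)
  (∀ u ∉ Out, lam u = YZ → u ∈ p u ∧ u ∉ OddNbhd G (p u)) ∧
  -- (7)
  (∀ u ∉ Out, lam u = X → u ∈ OddNbhd G (p u)) ∧
  -- (8)
  (∀ u ∉ Out, lam u = Z → u ∈ p u) ∧
  -- (9)
  (∀ u ∉ Out, lam u = Y →
    ((u ∈ p u ∧ u ∉ OddNbhd G (p u)) ∨ (u ∉ p u ∧ u ∈ OddNbhd G (p u))))

/-- Extend `G` by a fresh vertex (`none`) adjacent exactly to the vertices of `W`. -/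
def extendGraph {V : Type*} (G : SimpleGraph V) (W : Set V) : SimpleGraph (Option V) :=
  SimpleGraph.fromRel (fun a b =>
    match a, b with
    | some a, some b => G.Adj a b
    | none, some w => w ∈ W
    | _, _ => False)

set_option linter.unusedSectionVars false

section Aux
variable {V : Type*} (G : SimpleGraph V) (W : Set V)

lemma extend_adj_some_some (a b : V) :
    (extendGraph G W).Adj (some a) (some b) ↔ G.Adj a b := by
  simp only [extendGraph, SimpleGraph.fromRel_adj]
  constructor
  · rintro ⟨-, h | h⟩
    · exact h
    · exact h.symm
  · intro h; exact ⟨by simpa using h.ne, Or.inl h⟩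

lemma extend_adj_none_some (w : V) :
    (extendGraph G W).Adj none (some w) ↔ w ∈ W := by
  simp [extendGraph, SimpleGraph.fromRel_adj]

lemma extend_adj_some_none (w : V) :
    (extendGraph G W).Adj (some w) none ↔ w ∈ W := by
  rw [SimpleGraph.adj_comm]; exact extend_adj_none_some G W w

variable [Fintype V]

lemma nbhd_some_inter (v : V) (S : Set V) :
    (extendGraph G W).neighborSet (some v) ∩ (some '' S) =
      some '' (G.neighborSet v ∩ S) := by
  ext a
  cases a with
  | none => simp [SimpleGraph.mem_neighborSet]
  | some w =>
      simp [SimpleGraph.mem_neighborSet, extend_adj_some_some,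
        Set.mem_image, Option.some_injective]

lemma odd_some_iff (v : V) (S : Set V) :
    some v ∈ OddNbhd (extendGraph G W) (some '' S) ↔ v ∈ OddNbhd G S := by
  unfold OddNbhd
  simp only [Set.mem_setOf_eq, nbhd_some_inter,
    Set.ncard_image_of_injective _ (Option.some_injective V)]

lemma none_notmem_odd :
    none ∉ OddNbhd (extendGraph G W) ({(none : Option V)}) := by
  unfold OddNbhd
  simp only [Set.mem_setOf_eq]
  have h : (extendGraph G W).neighborSet none ∩ {(none : Option V)} = ∅ := by
    ext a
    simp only [Set.mem_inter_iff, SimpleGraph.mem_neighborSet, Set.mem_singleton_iff,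
      Set.mem_empty_iff_false, iff_false, not_and]
    rintro h rfl
    exact (extendGraph G W).irrefl h
  simp [h]

lemma some_mem_odd_singleton_none (v : V) :
    some v ∈ OddNbhd (extendGraph G W) ({(none : Option V)}) ↔ v ∈ W := by
  unfold OddNbhd
  simp only [Set.mem_setOf_eq]
  by_cases hv : v ∈ W
  · have h : (extendGraph G W).neighborSet (some v) ∩ {(none : Option V)} = {none} := by
      ext a
      simp only [Set.mem_inter_iff, SimpleGraph.mem_neighborSet, Set.mem_singleton_iff]
      constructor
      · rintro ⟨-, rfl⟩; rfl
      · rintro rfl; exact ⟨(extend_adj_some_none G W v).2 hv, rfl⟩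
    simp [h, hv]
  · have h : (extendGraph G W).neighborSet (some v) ∩ {(none : Option V)} = ∅ := by
      ext a
      simp only [Set.mem_inter_iff, SimpleGraph.mem_neighborSet, Set.mem_singleton_iff,
        Set.mem_empty_iff_false, iff_false, not_and]
      rintro h rfl
      exact hv ((extend_adj_some_none G W v).1 h)
    simp [h, hv]

lemma none_notmem_image_some (S : Set V) : (none : Option V) ∉ some '' S := by
  rintro ⟨w, -, h⟩; cases h

lemma some_mem_image_some (v : V) (S : Set V) : some v ∈ some '' S ↔ v ∈ S :=
  (Option.some_injective V).mem_set_image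

end Aux

section TG
variable {V : Type*} (ord : V → V → Prop) (W : Set V)

def rbase : Option V → Option V → Prop := fun a b =>
  match a, b with
  | some u, some v => ord u v
  | none, some v => v ∈ W
  | _, _ => False

lemma tg_cases (hord : Transitive ord) {a b : Option V}
    (h : Relation.TransGen (rbase ord W) a b) :
    ∃ v, b = some v ∧ ∀ u, a = some u → ord u v := by
  induction h with
  | @single b h =>
      cases a with
      | none =>
          cases b with
          | none => exact h.elim
          | some v => exact ⟨v, rfl, fun u hu => by cases hu⟩
      | some u =>
          cases b with
          | none => exact h.elim
          | some v =>
              refine ⟨v, rfl, fun u' hu => ?_⟩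
              obtain rfl : u = u' := Option.some_injective _ hu
              exact h
  | @tail b c h1 h2 ih =>
      obtain ⟨w, rfl, hw⟩ := ih
      cases c with
      | none => exact h2.elim
      | some v => exact ⟨v, rfl, fun u hu => hord (hw u hu) h2⟩

lemma tg_some_some (hord : Transitive ord) {u v : V}
    (h : Relation.TransGen (rbase ord W) (some u) (some v)) : ord u v := by
  obtain ⟨w, hw, h⟩ := tg_cases ord W hord h
  obtain rfl : v = w := Option.some_injective _ hw
  exact h u rfl

end TG


/-- Inserting a new `Z`-measured qubit connected to an arbitrary subset `W` of the
existing qubits preserves the existence of Pauli flow; in fact the explicitly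
given `p'` and transitive closure order form a Pauli flow for the extended graph. -/
theorem z_insertion_preserves_pauli_flow {V : Type*} [Fintype V]
    (G : SimpleGraph V) (Inp Out : Set V) (lam : V → MeasLabel)
    (p : V → Set V) (ord : V → V → Prop)
    (hflow : IsPauliFlow G Inp Out lam p ord) (W : Set V) :
    IsPauliFlow (extendGraph G W) (some '' Inp) (some '' Out)
      (fun a => a.elim MeasLabel.Z lam)
      (fun a => a.elim {(none : Option V)} (fun v => some '' p v))
      (Relation.TransGen (fun a b =>
        match a, b with
        | some u, some v => ord u v
        | none, some v => v ∈ W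
        | _, _ => False)) := by
  obtain ⟨hirr, htr, hsub, h1, h2, h3, h4, h5, h6, h7, h8, h9⟩ := hflow
  have hOut : ∀ u : V, some u ∉ some '' Out → u ∉ Out :=
    fun u hu h => hu ((some_mem_image_some u Out).2 h)
  refine ⟨?_, fun _ _ _ h1' h2' => h1'.trans h2', ?_, ?_, ?_, ?_, ?_, ?_, ?_, ?_, ?_, ?_⟩
  · -- irreflexive
    intro a h
    obtain ⟨v, hv, h2'⟩ := tg_cases ord W htr h
    subst hv
    exact hirr v (h2' v rfl)
  · -- subset of Inpᶜ
    intro u hu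
    cases u with
    | none =>
        intro a ha
        obtain rfl : a = none := ha
        exact none_notmem_image_some Inp
    | some u =>
        rintro a ⟨w, hw, rfl⟩ hmem
        rw [some_mem_image_some] at hmem
        exact hsub u (hOut u hu) hw hmem
  · -- (1)
    intro u hu v hv hvpu hne hX hY
    cases u with
    | none =>
        cases v with
        | none => exact absurd rfl hne
        | some v => exact absurd hvpu (by simp)
    | some u =>
        cases v with
        | none => exact absurd hvpu (none_notmem_image_some (p u))
        | some v =>
            exact Relation.TransGen.single
              (h1 u (hOut u hu) v (hOut v hv) ((some_mem_image_some v (p u)).1 hvpu)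
                (fun h => hne (congrArg some h)) hX hY)
  · -- (2)
    intro u hu v hv hvodd hne hY hZ
    cases u with
    | none =>
        cases v with
        | none => exact absurd hvodd (none_notmem_odd G W)
        | some v =>
            exact Relation.TransGen.single ((some_mem_odd_singleton_none G W v).1 hvodd)
    | some u =>
        cases v with
        | none => exact absurd rfl hZ
        | some v =>
            exact Relation.TransGen.single
              (h2 u (hOut u hu) v (hOut v hv) ((odd_some_iff G W v (p u)).1 hvodd)
                (fun h => hne (congrArg some h)) hY hZ)
  · -- (3)
    intro u hu v hv hnord hYv
    cases u with
    | none =>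
        cases v with
        | none => exact MeasLabel.noConfusion hYv
        | some v =>
            constructor
            · intro h; exact absurd h (by simp)
            · intro h
              exact absurd (Relation.TransGen.single
                ((some_mem_odd_singleton_none G W v).1 h)) hnord
    | some u =>
        cases v with
        | none => exact MeasLabel.noConfusion hYv
        | some v =>
            have := h3 u (hOut u hu) v (hOut v hv)
              (fun h => hnord (Relation.TransGen.single h)) hYv
            exact (some_mem_image_some v (p u)).trans
              (this.trans (odd_some_iff G W v (p u)).symm)
  · -- (4)
    intro u hu hlab
    cases u with
    | none => exact MeasLabel.noConfusion hlab
    | some u =>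
        obtain ⟨ha, hb⟩ := h4 u (hOut u hu) hlab
        exact ⟨fun h => ha ((some_mem_image_some u (p u)).1 h),
          (odd_some_iff G W u (p u)).2 hb⟩
  · -- (5)
    intro u hu hlab
    cases u with
    | none => exact MeasLabel.noConfusion hlab
    | some u =>
        obtain ⟨ha, hb⟩ := h5 u (hOut u hu) hlab
        exact ⟨(some_mem_image_some u (p u)).2 ha, (odd_some_iff G W u (p u)).2 hb⟩
  · -- (6)
    intro u hu hlab
    cases u with
    | none => exact MeasLabel.noConfusion hlab
    | some u =>
        obtain ⟨ha, hb⟩ := h6 u (hOut u hu) hlab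
        exact ⟨(some_mem_image_some u (p u)).2 ha,
          fun h => hb ((odd_some_iff G W u (p u)).1 h)⟩
  · -- (7)
    intro u hu hlab
    cases u with
    | none => exact MeasLabel.noConfusion hlab
    | some u => exact (odd_some_iff G W u (p u)).2 (h7 u (hOut u hu) hlab)
  · -- (8)
    intro u hu hlab
    cases u with
    | none => exact rfl
    | some u => exact (some_mem_image_some u (p u)).2 (h8 u (hOut u hu) hlab)
  · -- (9)
    intro u hu hlab
    cases u with
    | none => exact MeasLabel.noConfusion hlab
    | some u =>
        rcases h9 u (hOut u hu) hlab with ⟨ha, hb⟩ | ⟨ha, hb⟩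
        · exact Or.inl ⟨(some_mem_image_some u (p u)).2 ha,
            fun h => hb ((odd_some_iff G W u (p u)).1 h)⟩
        · exact Or.inr ⟨fun h => ha ((some_mem_image_some u (p u)).1 h),
            (odd_some_iff G W u (p u)).2 hb⟩
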